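/- Non-existence in dimension n ≥ 6. For every n ≥ 6 there exists a smooth Weyl candidate W_{abcd} on flat ℝⁿ (for any chosen signature of the constant metric η) such that no three times continuously differentiable tensor field L_{abc} with L_{abc} = L_{[ab]c} satisfies equation (4); i.e., a Lanczos potential for Weyl candidates does not generally exist in flat space of dimension at least six. -/

import Mathlib

open scoped ContDiff

noncomputable section

/-- Partial derivative `∂ᵢ f` of a scalar field on flat `ℝⁿ` (points represented as
`Fin n → ℝ`, standard coordinates) in the `i`-th coordinate direction.  In Cartesian
coordinates on flat space this is the covariant derivative `;i`. -/
def pd {n : ℕ} (i : Fin n) (f : (Fin n → ℝ) → ℝ) : (Fin n → ℝ) → ℝ :=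
  fun x => fderiv ℝ f x (Pi.single i 1)

/-- Components `η_{ab}` of the constant diagonal metric with diagonal entries `η a = ±1`;
since the entries are `±1` these coincide with the components `η^{ab}` of the inverse
metric. -/
def gm {n : ℕ} (η : Fin n → ℝ) (a b : Fin n) : ℝ := if a = b then η a else 0

/-- Antisymmetrization over two index slots. -/
def asym2 {n : ℕ} (T : Fin n → Fin n → ℝ) (a b : Fin n) : ℝ := (T a b - T b a) / 2

/-- Antisymmetrization over three index slots. -/
def asym3 {n : ℕ} (T : Fin n → Fin n → Fin n → ℝ) (a b c : Fin n) : ℝ :=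
  (T a b c - T a c b - T b a c + T b c a + T c a b - T c b a) / 6

/-- Simultaneous antisymmetrization over a pair of upper slots and a pair of lower slots. -/
def asym22 {n : ℕ} (T : Fin n → Fin n → Fin n → Fin n → ℝ) (a b c d : Fin n) : ℝ :=
  (T a b c d - T b a c d - T a b d c + T b a d c) / 4

/-- Simultaneous antisymmetrization over a triple of upper slots and a triple of lower
slots (arguments ordered as `T upper₁ upper₂ upper₃ lower₁ lower₂ lower₃`). -/
def asym33 {n : ℕ} (T : Fin n → Fin n → Fin n → Fin n → Fin n → Fin n → ℝ)
    (a b f c d e : Fin n) : ℝ :=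
  asym3 (fun a b f => asym3 (fun c d e => T a b f c d e) c d e) a b f

/-- A Weyl candidate: a 4-tensor field with the index symmetries (3a)–(3d):
antisymmetry in the first and in the second index pair, symmetry under interchange of the
two pairs, vanishing cyclic sum `W_{a[bcd]} = 0`, and vanishing trace `W^a{}_{bad} = 0`
(the trace being taken with the metric `η`). -/
def WeylCandidate {n : ℕ} (η : Fin n → ℝ)
    (W : (Fin n → ℝ) → Fin n → Fin n → Fin n → Fin n → ℝ) : Prop :=
  (∀ x a b c d, W x a b c d = - W x b a c d) ∧
  (∀ x a b c d, W x a b c d = - W x a b d c) ∧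
  (∀ x a b c d, W x a b c d = W x c d a b) ∧
  (∀ x a b c d, asym3 (fun b c d => W x a b c d) b c d = 0) ∧
  (∀ x b d, ∑ a, η a * W x a b a d = 0)

/-- The right-hand side of the Lanczos potential equation (4), in the equivalent fully
lowered form (the free indices `a b`, raised in the paper, are lowered with the invertible
diagonal metric `η`, which only multiplies each component equation by `η a * η b ≠ 0`).
Each contracted (dummy) index pair carries a factor `η i` coming from the inverse
metric. -/
def rhs4 {n : ℕ} (η : Fin n → ℝ) (L : (Fin n → ℝ) → Fin n → Fin n → Fin n → ℝ)
    (x : Fin n → ℝ) (a b c d : Fin n) : ℝ :=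
  -- 2 L^{ab}{}_{[c;d]}
  (pd d (L · a b c) x - pd c (L · a b d) x)
  -- + 2 L_{cd}{}^{[a;b]}
  + (pd b (L · c d a) x - pd a (L · c d b) x)
  -- − (4/(n−2)) δ^{[a}_{[c} ( L^{b]i}{}_{d];i} − L^{b]i}{}_{|i|;d]} + L_{d]i}{}^{b];i} − L_{d]i}{}^{|i|;b]} )
  - (4 / ((n : ℝ) - 2)) *
      asym22 (fun a b c d =>
        gm η a c *
          ∑ i, η i *
            (pd i (L · b i d) x - pd d (L · b i i) x
              + pd i (L · d i b) x - pd b (L · d i i) x)) a b c d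
  -- + (8/((n−2)(n−1))) δ^{a}_{[c} δ^{b}_{d]} L^{ij}{}_{i;j}
  + (8 / (((n : ℝ) - 2) * ((n : ℝ) - 1))) *
      ((gm η a c * gm η b d - gm η a d * gm η b c) / 2) *
      ∑ i, ∑ j, η i * η j * pd j (L · i j i) x

/-- Equation (4): `L` is a Lanczos potential for `W` (fully lowered, equivalent form). -/
def Eq4 {n : ℕ} (η : Fin n → ℝ)
    (W : (Fin n → ℝ) → Fin n → Fin n → Fin n → Fin n → ℝ)
    (L : (Fin n → ℝ) → Fin n → Fin n → Fin n → ℝ) : Prop :=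
  ∀ x a b c d, W x a b c d = rhs4 η L x a b c d

/-- The right-hand side of equation (5) (equation (4) in the Lanczos algebraic gauge
`L_{ab}{}^b = 0`), fully lowered form:
`2 L^{ab}{}_{[c;d]} + 2 L_{cd}{}^{[a;b]} − (4/(n−2)) δ^{[a}_{[c} ( L^{b]i}{}_{d];i} + L_{d]i}{}^{b];i} )`. -/
def rhs5 {n : ℕ} (η : Fin n → ℝ) (L : (Fin n → ℝ) → Fin n → Fin n → Fin n → ℝ)
    (x : Fin n → ℝ) (a b c d : Fin n) : ℝ :=
  (pd d (L · a b c) x - pd c (L · a b d) x)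
  + (pd b (L · c d a) x - pd a (L · c d b) x)
  - (4 / ((n : ℝ) - 2)) *
      asym22 (fun a b c d =>
        gm η a c * ∑ i, η i * (pd i (L · b i d) x + pd i (L · d i b) x)) a b c d

/-- Equation (5). -/
def Eq5 {n : ℕ} (η : Fin n → ℝ)
    (W : (Fin n → ℝ) → Fin n → Fin n → Fin n → Fin n → ℝ)
    (L : (Fin n → ℝ) → Fin n → Fin n → Fin n → ℝ) : Prop :=
  ∀ x a b c d, W x a b c d = rhs5 η L x a b c d

/-- Constraint (8), fully lowered form:
`W^{[ab}{}_{[cd;e]}{}^{f]} = (1/(n−4)) δ^{[a}_{[c} W^{bf]}{}_{de];i}{}^{i}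
 + (2/(n−4)) δ^{[a}_{[c} W^{|i|b}{}_{de];i}{}^{f]} + (2/(n−4)) δ^{[a}_{[c} W^{bf]}{}_{|i|d;e]}{}^{i}
 + (4/((n−3)(n−4))) δ^{[a}_{[c} δ^{b}_{d} W^{f]i}{}_{e]j;i}{}^{j}`. -/
def Constraint8 {n : ℕ} (η : Fin n → ℝ)
    (W : (Fin n → ℝ) → Fin n → Fin n → Fin n → Fin n → ℝ) : Prop :=
  ∀ x a b f c d e,
    asym33 (fun a b f c d e => pd f (pd e (W · a b c d)) x) a b f c d e =
      (1 / ((n : ℝ) - 4)) *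
          asym33 (fun a b f c d e =>
            gm η a c * ∑ i, η i * pd i (pd i (W · b f d e)) x) a b f c d e
      + (2 / ((n : ℝ) - 4)) *
          asym33 (fun a b f c d e =>
            gm η a c * ∑ i, η i * pd f (pd i (W · i b d e)) x) a b f c d e
      + (2 / ((n : ℝ) - 4)) *
          asym33 (fun a b f c d e =>
            gm η a c * ∑ i, η i * pd i (pd e (W · b f i d)) x) a b f c d e
      + (4 / (((n : ℝ) - 3) * ((n : ℝ) - 4))) *
          asym33 (fun a b f c d e =>
            gm η a c * gm η b d *
              ∑ i, ∑ j, η i * η j * pd j (pd i (W · f i e j)) x) a b f c d e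

/-- Constraint (10), fully lowered form:
`W^{[ab}{}_{cd;i}{}^{|i|e]} + 2 W^{[ab}{}_{i[c;d]}{}^{|i|e]}
 + (4/(n−3)) δ^{[a}_{[c} W^{b|i}{}_{d]j;i}{}^{j|e]} = 0`,
antisymmetrized over the upper indices `a b e` and (where indicated) the lower indices
`c d`. -/
def Constraint10 {n : ℕ} (η : Fin n → ℝ)
    (W : (Fin n → ℝ) → Fin n → Fin n → Fin n → Fin n → ℝ) : Prop :=
  ∀ x a b e c d,
    asym3 (fun a b e =>
      (∑ i, η i * pd e (pd i (pd i (W · a b c d))) x)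
      + 2 * asym2 (fun c d =>
            ∑ i, η i * pd e (pd i (pd d (W · a b i c))) x) c d
      + (4 / ((n : ℝ) - 3)) * asym2 (fun c d =>
            gm η a c *
              ∑ i, ∑ j, η i * η j * pd e (pd j (pd i (W · b i d j))) x) c d) a b e
    = 0

section Aux
variable {n : ℕ}

lemma pd_neg (i : Fin n) (f : (Fin n → ℝ) → ℝ) :
    pd i (fun x => -f x) = fun x => -pd i f x := by
  funext x; simp [pd, fderiv_neg]

lemma pd_contDiff {m : WithTop ℕ∞} {f : (Fin n → ℝ) → ℝ}
    (hf : ContDiff ℝ (m + 1) f) (i : Fin n) : ContDiff ℝ m (pd i f) := by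
  have h1 : ContDiff ℝ m (fderiv ℝ f) := hf.fderiv_right le_rfl
  exact (ContinuousLinearMap.apply ℝ ℝ (Pi.single i 1)).contDiff.comp h1

lemma pd_comm {f : (Fin n → ℝ) → ℝ} (hf : ContDiff ℝ 2 f) (i j : Fin n) (x : Fin n → ℝ) :
    pd i (pd j f) x = pd j (pd i f) x := by
  have hd : DifferentiableAt ℝ (fderiv ℝ f) x :=
    (hf.fderiv_right (m := 1) (by norm_num)).differentiable one_ne_zero x
  have hsymm : IsSymmSndFDerivAt ℝ f x := hf.contDiffAt.isSymmSndFDerivAt (by simp)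
  have e : ∀ u v : Fin n, pd u (pd v f) x
      = fderiv ℝ (fderiv ℝ f) x (Pi.single u 1) (Pi.single v 1) := by
    intro u v
    show fderiv ℝ (fun y => fderiv ℝ f y (Pi.single v 1)) x (Pi.single u 1) = _
    rw [fderiv_clm_apply hd (differentiableAt_const _)]
    simp
  rw [e i j, e j i, hsymm]

lemma pd_comb4 {A B C D : (Fin n → ℝ) → ℝ} (hA : Differentiable ℝ A)
    (hB : Differentiable ℝ B) (hC : Differentiable ℝ C) (hD : Differentiable ℝ D) (i : Fin n) :
    pd i (fun x => (A x - B x) + (C x - D x))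
      = fun x => (pd i A x - pd i B x) + (pd i C x - pd i D x) := by
  funext x
  simp only [pd]
  rw [fderiv_fun_add (f := fun y => A y - B y) (g := fun y => C y - D y) ((hA x).sub (hB x)) ((hC x).sub (hD x)),
      fderiv_fun_sub (hA x) (hB x), fderiv_fun_sub (hC x) (hD x)]
  simp

end Aux
section Aux2
variable {n : ℕ}

lemma rhs4_distinct (η : Fin n → ℝ) (L : (Fin n → ℝ) → Fin n → Fin n → Fin n → ℝ)
    (x : Fin n → ℝ) {a b c d : Fin n}
    (h1 : a ≠ c) (h2 : a ≠ d) (h3 : b ≠ c) (h4 : b ≠ d) :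
    rhs4 η L x a b c d
      = (pd d (fun y => L y a b c) x - pd c (fun y => L y a b d) x)
        + (pd b (fun y => L y c d a) x - pd a (fun y => L y c d b) x) := by
  simp [rhs4, asym22, gm, h1, h2, h3, h4]

lemma dd_rhs4 (η : Fin n → ℝ) (L : (Fin n → ℝ) → Fin n → Fin n → Fin n → ℝ)
    (hL : ∀ a b c, ContDiff ℝ 3 (fun x => L x a b c)) (x0 : Fin n → ℝ)
    (f e : Fin n) {a b c d : Fin n}
    (h1 : a ≠ c) (h2 : a ≠ d) (h3 : b ≠ c) (h4 : b ≠ d) :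
    pd f (pd e (fun x => rhs4 η L x a b c d)) x0
      = (pd f (pd e (pd d (fun x => L x a b c))) x0
          - pd f (pd e (pd c (fun x => L x a b d))) x0)
        + (pd f (pd e (pd b (fun x => L x c d a))) x0
          - pd f (pd e (pd a (fun x => L x c d b))) x0) := by
  have hC2 : ∀ (k p q r : Fin n), ContDiff ℝ 2 (pd k (fun x => L x p q r)) := by
    intro k p q r
    exact pd_contDiff (by exact_mod_cast hL p q r) k
  have hC1 : ∀ (j k p q r : Fin n), ContDiff ℝ 1 (pd j (pd k (fun x => L x p q r))) := by
    intro j k p q r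
    exact pd_contDiff (by exact_mod_cast hC2 k p q r) j
  have hfn : (fun x => rhs4 η L x a b c d)
      = fun x => (pd d (fun y => L y a b c) x - pd c (fun y => L y a b d) x)
        + (pd b (fun y => L y c d a) x - pd a (fun y => L y c d b) x) :=
    funext fun x => rhs4_distinct η L x h1 h2 h3 h4
  rw [hfn, pd_comb4 ((hC2 d a b c).differentiable two_ne_zero)
    ((hC2 c a b d).differentiable two_ne_zero) ((hC2 b c d a).differentiable two_ne_zero)
    ((hC2 a c d b).differentiable two_ne_zero),
    pd_comb4 ((hC1 e d a b c).differentiable one_ne_zero) ((hC1 e c a b d).differentiable one_ne_zero)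
    ((hC1 e b c d a).differentiable one_ne_zero) ((hC1 e a c d b).differentiable one_ne_zero)]

end Aux2
section Aux3
variable {n : ℕ}

/-- Components of the elementary bivector `e_p ∧ e_q`. -/
def UU (p q a b : Fin n) : ℝ :=
  (if a = p then (1:ℝ) else 0) * (if b = q then (1:ℝ) else 0)
    - (if a = q then (1:ℝ) else 0) * (if b = p then (1:ℝ) else 0)

/-- A constant algebraic Weyl candidate built from two disjoint bivectors. -/
def CC (p q r s a b c d : Fin n) : ℝ :=
  2 * UU p q a b * UU r s c d + 2 * UU r s a b * UU p q c d
    + UU p q a c * UU r s b d + UU r s a c * UU p q b d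
    - UU p q a d * UU r s b c - UU r s a d * UU p q b c

lemma CC_antisym1 (p q r s a b c d : Fin n) :
    CC p q r s a b c d = - CC p q r s b a c d := by
  simp only [CC, UU]; ring

lemma CC_antisym2 (p q r s a b c d : Fin n) :
    CC p q r s a b c d = - CC p q r s a b d c := by
  simp only [CC, UU]; ring

lemma CC_pairsym (p q r s a b c d : Fin n) :
    CC p q r s a b c d = CC p q r s c d a b := by
  simp only [CC, UU]; ring

lemma CC_bianchi (p q r s a b c d : Fin n) :
    asym3 (fun b c d => CC p q r s a b c d) b c d = 0 := by
  simp only [asym3, CC, UU]; ring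

lemma UU_diag (x y a : Fin n) : UU x y a a = 0 := by
  simp only [UU]; ring

lemma CC_trace {p q r s : Fin n} (hpr : p ≠ r) (hps : p ≠ s) (hqr : q ≠ r) (hqs : q ≠ s)
    (a b d : Fin n) : CC p q r s a b a d = 0 := by
  by_cases hap : a = p
  · subst hap; simp [CC, UU, hpr, hps]
  by_cases haq : a = q
  · subst haq; simp [CC, UU, hqr, hqs]
  · simp only [CC, UU_diag, mul_zero, zero_mul]
    simp [UU, hap, haq]

end Aux3
section Aux4
variable {n : ℕ}

lemma diff_coord (k : Fin n) : Differentiable ℝ (fun y : Fin n → ℝ => y k) :=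
  (ContinuousLinearMap.proj k (R := ℝ) (φ := fun _ : Fin n => ℝ)).differentiable

lemma fderiv_coord (k : Fin n) (x : Fin n → ℝ) :
    fderiv ℝ (fun y : Fin n → ℝ => y k) x = ContinuousLinearMap.proj k :=
  (ContinuousLinearMap.proj k (R := ℝ) (φ := fun _ : Fin n => ℝ)).fderiv

lemma pd_coord_mul (i j : Fin n) (c : ℝ) (e : Fin n) :
    pd e (fun x => x i * x j * c)
      = fun x => (x i * (if j = e then 1 else 0)
          + x j * (if i = e then 1 else 0)) * c := by
  funext x
  simp only [pd]
  rw [fderiv_mul_const (c := fun y : Fin n → ℝ => y i * y j) ((diff_coord i x).mul (diff_coord j x)),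
      fderiv_fun_mul (diff_coord i x) (diff_coord j x), fderiv_coord, fderiv_coord]
  simp [Pi.single_apply]
  split_ifs <;> ring

lemma pdpd_coord_mul (i j : Fin n) (c : ℝ) (e f : Fin n) (x0 : Fin n → ℝ) :
    pd f (pd e (fun x => x i * x j * c)) x0
      = ((if i = f then (1:ℝ) else 0) * (if j = e then 1 else 0)
          + (if j = f then (1:ℝ) else 0) * (if i = e then 1 else 0)) * c := by
  rw [pd_coord_mul]
  have hrw : (fun x : Fin n → ℝ => (x i * (if j = e then (1:ℝ) else 0)
      + x j * (if i = e then 1 else 0)) * c)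
      = fun x => x i * ((if j = e then (1:ℝ) else 0) * c)
          + x j * ((if i = e then (1:ℝ) else 0) * c) := by
    funext x; ring
  rw [hrw]
  simp only [pd]
  rw [fderiv_fun_add ((diff_coord i x0).mul_const _) ((diff_coord j x0).mul_const _),
      fderiv_mul_const (diff_coord i x0), fderiv_mul_const (diff_coord j x0),
      fderiv_coord, fderiv_coord]
  split_ifs <;> simp [Pi.single_apply] <;> simp_all <;> try ring
  all_goals (split_ifs <;> simp_all <;> ring)
end Aux4

section Main
variable {n : ℕ}

theorem main_aux (η : Fin n → ℝ) (i0 i1 i2 i3 i4 i5 : Fin n)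
    (d01 : i0 ≠ i1) (d02 : i0 ≠ i2) (d03 : i0 ≠ i3) (d04 : i0 ≠ i4) (d05 : i0 ≠ i5)
    (d12 : i1 ≠ i2) (d13 : i1 ≠ i3) (d14 : i1 ≠ i4) (d15 : i1 ≠ i5)
    (d23 : i2 ≠ i3) (d24 : i2 ≠ i4) (d25 : i2 ≠ i5)
    (d34 : i3 ≠ i4) (d35 : i3 ≠ i5) (d45 : i4 ≠ i5) :
    ∃ W : (Fin n → ℝ) → Fin n → Fin n → Fin n → Fin n → ℝ,
      (∀ a b c d, ContDiff ℝ ∞ (fun x => W x a b c d)) ∧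
      WeylCandidate η W ∧
      ¬ ∃ L : (Fin n → ℝ) → Fin n → Fin n → Fin n → ℝ,
          (∀ a b c, ContDiff ℝ 3 (fun x => L x a b c)) ∧
          (∀ x a b c, L x a b c = - L x b a c) ∧
          Eq4 η (fun x a b c d => W x a b c d) L := by
  refine ⟨fun x a b c d => x i4 * x i5 * CC i0 i1 i2 i3 a b c d, ?_, ?_, ?_⟩
  · intro a b c d
    exact ((contDiff_pi.mp contDiff_id i4).mul (contDiff_pi.mp contDiff_id i5)).mul contDiff_const
  · refine ⟨?_, ?_, ?_, ?_, ?_⟩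
    · intro x a b c d
      have h := CC_antisym1 i0 i1 i2 i3 a b c d
      dsimp only
      linear_combination (x i4 * x i5) * h
    · intro x a b c d
      have h := CC_antisym2 i0 i1 i2 i3 a b c d
      dsimp only
      linear_combination (x i4 * x i5) * h
    · intro x a b c d
      have h := CC_pairsym i0 i1 i2 i3 a b c d
      dsimp only
      linear_combination (x i4 * x i5) * h
    · intro x a b c d
      have h := CC_bianchi i0 i1 i2 i3 a b c d
      simp only [asym3] at h ⊢
      linear_combination (x i4 * x i5) * h
    · intro x b d
      refine Finset.sum_eq_zero fun a _ => ?_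
      dsimp only
      rw [CC_trace d02 d03 d12 d13]
      ring
  rintro ⟨L, hL, hanti, hEq4⟩
  have hQ12 : ∀ i j k p q r : Fin n,
      pd i (pd j (pd k (fun x => L x p q r))) (0 : Fin n → ℝ)
        = pd j (pd i (pd k (fun x => L x p q r))) (0 : Fin n → ℝ) := by
    intro i j k p q r
    exact pd_comm (pd_contDiff (by exact_mod_cast hL p q r) k) i j 0
  have hQ23 : ∀ i j k p q r : Fin n,
      pd i (pd j (pd k (fun x => L x p q r))) (0 : Fin n → ℝ)
        = pd i (pd k (pd j (fun x => L x p q r))) (0 : Fin n → ℝ) := by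
    intro i j k p q r
    have h : pd j (pd k (fun x => L x p q r)) = pd k (pd j (fun x => L x p q r)) :=
      funext fun y => pd_comm ((hL p q r).of_le (by norm_num)) j k y
    rw [h]
  have hQa : ∀ i j k p q r : Fin n,
      pd i (pd j (pd k (fun x => L x p q r))) (0 : Fin n → ℝ)
        = - pd i (pd j (pd k (fun x => L x q p r))) (0 : Fin n → ℝ) := by
    intro i j k p q r
    have h : (fun x => L x p q r) = fun x => -L x q p r := funext fun x => hanti x p q r
    rw [h]
    simp only [pd_neg]
  have hzero : asym33 (fun a b f c d e =>
      pd f (pd e (fun x => rhs4 η L x a b c d)) (0 : Fin n → ℝ)) i0 i1 i4 i2 i3 i5 = 0 := by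
    simp only [asym33, asym3]
    simp only [dd_rhs4 η L hL 0 i4 i5 (d02) (d03) (d12) (d13),
      dd_rhs4 η L hL 0 i4 i3 (d02) (d05) (d12) (d15),
      dd_rhs4 η L hL 0 i4 i5 (d03) (d02) (d13) (d12),
      dd_rhs4 η L hL 0 i4 i2 (d03) (d05) (d13) (d15),
      dd_rhs4 η L hL 0 i4 i3 (d05) (d02) (d15) (d12),
      dd_rhs4 η L hL 0 i4 i2 (d05) (d03) (d15) (d13),
      dd_rhs4 η L hL 0 i1 i5 (d02) (d03) (d24.symm) (d34.symm),
      dd_rhs4 η L hL 0 i1 i3 (d02) (d05) (d24.symm) (d45),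
      dd_rhs4 η L hL 0 i1 i5 (d03) (d02) (d34.symm) (d24.symm),
      dd_rhs4 η L hL 0 i1 i2 (d03) (d05) (d34.symm) (d45),
      dd_rhs4 η L hL 0 i1 i3 (d05) (d02) (d45) (d24.symm),
      dd_rhs4 η L hL 0 i1 i2 (d05) (d03) (d45) (d34.symm),
      dd_rhs4 η L hL 0 i4 i5 (d12) (d13) (d02) (d03),
      dd_rhs4 η L hL 0 i4 i3 (d12) (d15) (d02) (d05),
      dd_rhs4 η L hL 0 i4 i5 (d13) (d12) (d03) (d02),
      dd_rhs4 η L hL 0 i4 i2 (d13) (d15) (d03) (d05),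
      dd_rhs4 η L hL 0 i4 i3 (d15) (d12) (d05) (d02),
      dd_rhs4 η L hL 0 i4 i2 (d15) (d13) (d05) (d03),
      dd_rhs4 η L hL 0 i0 i5 (d12) (d13) (d24.symm) (d34.symm),
      dd_rhs4 η L hL 0 i0 i3 (d12) (d15) (d24.symm) (d45),
      dd_rhs4 η L hL 0 i0 i5 (d13) (d12) (d34.symm) (d24.symm),
      dd_rhs4 η L hL 0 i0 i2 (d13) (d15) (d34.symm) (d45),
      dd_rhs4 η L hL 0 i0 i3 (d15) (d12) (d45) (d24.symm),
      dd_rhs4 η L hL 0 i0 i2 (d15) (d13) (d45) (d34.symm),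
      dd_rhs4 η L hL 0 i1 i5 (d24.symm) (d34.symm) (d02) (d03),
      dd_rhs4 η L hL 0 i1 i3 (d24.symm) (d45) (d02) (d05),
      dd_rhs4 η L hL 0 i1 i5 (d34.symm) (d24.symm) (d03) (d02),
      dd_rhs4 η L hL 0 i1 i2 (d34.symm) (d45) (d03) (d05),
      dd_rhs4 η L hL 0 i1 i3 (d45) (d24.symm) (d05) (d02),
      dd_rhs4 η L hL 0 i1 i2 (d45) (d34.symm) (d05) (d03),
      dd_rhs4 η L hL 0 i0 i5 (d24.symm) (d34.symm) (d12) (d13),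
      dd_rhs4 η L hL 0 i0 i3 (d24.symm) (d45) (d12) (d15),
      dd_rhs4 η L hL 0 i0 i5 (d34.symm) (d24.symm) (d13) (d12),
      dd_rhs4 η L hL 0 i0 i2 (d34.symm) (d45) (d13) (d15),
      dd_rhs4 η L hL 0 i0 i3 (d45) (d24.symm) (d15) (d12),
      dd_rhs4 η L hL 0 i0 i2 (d45) (d34.symm) (d15) (d13)]
    linear_combination (norm := ring1) (1/18 : ℝ) * (hQ23 i4 i5 i3 i0 i1 i2) - (1/18 : ℝ) * (hQ23 i4 i5 i2 i0 i1 i3) + (1/18 : ℝ) * (hQ23 i4 i5 i1 i2 i3 i0) + (1/18 : ℝ) * (hQ12 i4 i1 i5 i2 i3 i0) - (1/18 : ℝ) * (hQ23 i4 i5 i0 i2 i3 i1) - (1/18 : ℝ) * (hQ12 i4 i0 i5 i2 i3 i1) + (1/18 : ℝ) * (hQ12 i4 i3 i2 i0 i1 i5) + (1/18 : ℝ) * (hQ23 i3 i4 i2 i0 i1 i5) + (1/18 : ℝ) * (hQ12 i3 i2 i4 i0 i1 i5) - (1/18 : ℝ) * (hQ12 i4 i3 i1 i2 i5 i0) - (1/18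 : ℝ) * (hQ23 i3 i4 i1 i2 i5 i0) - (1/18 : ℝ) * (hQ12 i3 i1 i4 i2 i5 i0) + (1/18 : ℝ) * (hQ12 i4 i3 i0 i2 i5 i1) + (1/18 : ℝ) * (hQ23 i3 i4 i0 i2 i5 i1) + (1/18 : ℝ) * (hQ12 i3 i0 i4 i2 i5 i1) - (1/18 : ℝ) * (hQ23 i4 i5 i1 i3 i2 i0) - (1/18 : ℝ) * (hQ12 i4 i1 i5 i3 i2 i0) + (1/18 : ℝ) * (hQ23 i4 i5 i0 i3 i2 i1) + (1/18 : ℝ) * (hQ12 i4 i0 i5 i3 i2 i1) - (1/18 : ℝ) * (hQ12 i4 i2 i3 i0 i1 i5) - (1/18 : ℝ) * (hQ23 i2 i4 i3 i0 i1 i5) + (1/18 : ℝ) * (hQ12 i4 i2 i1 i3 i5 i0) + (1/18 : ℝ) * (hQ23 i2 i4 i1 i3 i5 i0) + (1/18 : ℝ) * (hQ12 i2 i1 i4 i3 i5 i0) - (1/18 : ℝ) * (hQ12 i4 i2 i0 i3 i5 i1) - (1/18 : ℝ) * (hQ23 i2 i4 i0 i3 i5 i1) - (1/18 : ℝ) *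 (hQ12 i2 i0 i4 i3 i5 i1) + (1/18 : ℝ) * (hQ12 i4 i3 i1 i5 i2 i0) + (1/18 : ℝ) * (hQ23 i3 i4 i1 i5 i2 i0) + (1/18 : ℝ) * (hQ12 i3 i1 i4 i5 i2 i0) - (1/18 : ℝ) * (hQ12 i4 i3 i0 i5 i2 i1) - (1/18 : ℝ) * (hQ23 i3 i4 i0 i5 i2 i1) - (1/18 : ℝ) * (hQ12 i3 i0 i4 i5 i2 i1) - (1/18 : ℝ) * (hQ12 i4 i2 i1 i5 i3 i0) - (1/18 : ℝ) * (hQ23 i2 i4 i1 i5 i3 i0) - (1/18 : ℝ) * (hQ12 i2 i1 i4 i5 i3 i0) + (1/18 : ℝ) * (hQ12 i4 i2 i0 i5 i3 i1) + (1/18 : ℝ) * (hQ23 i2 i4 i0 i5 i3 i1) + (1/18 : ℝ) * (hQ12 i2 i0 i4 i5 i3 i1) - (1/18 : ℝ) * (hQ23 i1 i5 i3 i0 i4 i2) + (1/18 : ℝ) * (hQ23 i1 i5 i2 i0 i4 i3) - (1/18 : ℝ) * (hQ23 i1 i5 i4 i2 i3 i0) + (1/18 : ℝ) * (hQ23 i1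 i5 i0 i2 i3 i4) + (1/18 : ℝ) * (hQ12 i1 i0 i5 i2 i3 i4) - (1/18 : ℝ) * (hQ23 i1 i3 i2 i0 i4 i5) - (1/18 : ℝ) * (hQ23 i1 i3 i0 i2 i5 i4) - (1/18 : ℝ) * (hQ12 i1 i0 i3 i2 i5 i4) + (1/18 : ℝ) * (hQ23 i1 i5 i4 i3 i2 i0) - (1/18 : ℝ) * (hQ23 i1 i5 i0 i3 i2 i4) - (1/18 : ℝ) * (hQ12 i1 i0 i5 i3 i2 i4) + (1/18 : ℝ) * (hQ23 i1 i2 i0 i3 i5 i4) + (1/18 : ℝ) * (hQ12 i1 i0 i2 i3 i5 i4) + (1/18 : ℝ) * (hQ23 i1 i3 i0 i5 i2 i4) + (1/18 : ℝ) * (hQ12 i1 i0 i3 i5 i2 i4) - (1/18 : ℝ) * (hQ23 i1 i2 i0 i5 i3 i4) - (1/18 : ℝ) * (hQ12 i1 i0 i2 i5 i3 i4) - (1/18 : ℝ) * (hQ23 i4 i5 i3 i1 i0 i2) + (1/18 : ℝ) * (hQ23 i4 i5 i2 i1 i0 i3) - (1/18 : ℝ) * (hQ12 i4 i3 i2 i1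 i0 i5) - (1/18 : ℝ) * (hQ23 i3 i4 i2 i1 i0 i5) - (1/18 : ℝ) * (hQ12 i3 i2 i4 i1 i0 i5) + (1/18 : ℝ) * (hQ12 i4 i2 i3 i1 i0 i5) + (1/18 : ℝ) * (hQ23 i2 i4 i3 i1 i0 i5) + (1/18 : ℝ) * (hQ23 i0 i5 i3 i1 i4 i2) - (1/18 : ℝ) * (hQ23 i0 i5 i2 i1 i4 i3) + (1/18 : ℝ) * (hQ23 i0 i5 i4 i2 i3 i1) - (1/18 : ℝ) * (hQ23 i0 i5 i1 i2 i3 i4) + (1/18 : ℝ) * (hQ23 i0 i3 i2 i1 i4 i5) + (1/18 : ℝ) * (hQ23 i0 i3 i1 i2 i5 i4) - (1/18 : ℝ) * (hQ23 i0 i5 i4 i3 i2 i1) + (1/18 : ℝ) * (hQ23 i0 i5 i1 i3 i2 i4) - (1/18 : ℝ) * (hQ23 i0 i2 i1 i3 i5 i4) - (1/18 : ℝ) * (hQ23 i0 i3 i1 i5 i2 i4) + (1/18 : ℝ) * (hQ23 i0 i2 i1 i5 i3 i4) + (1/18 : ℝ) * (hQ23 i1 i5 i3 i4 i0 i2) -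 (1/18 : ℝ) * (hQ23 i1 i5 i2 i4 i0 i3) + (1/18 : ℝ) * (hQ23 i1 i3 i2 i4 i0 i5) - (1/18 : ℝ) * (hQ23 i0 i5 i3 i4 i1 i2) + (1/18 : ℝ) * (hQ23 i0 i5 i2 i4 i1 i3) - (1/18 : ℝ) * (hQ23 i0 i3 i2 i4 i1 i5)
  have hval : asym33 (fun a b f c d e =>
      pd f (pd e (fun x => x i4 * x i5 * CC i0 i1 i2 i3 a b c d)) (0 : Fin n → ℝ))
        i0 i1 i4 i2 i3 i5 = 2 / 9 := by
    simp only [asym33, asym3, pdpd_coord_mul]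
    norm_num [CC, UU, d01, d01.symm, d02, d02.symm, d03, d03.symm, d04, d04.symm, d05, d05.symm, d12, d12.symm, d13, d13.symm, d14, d14.symm, d15, d15.symm, d23, d23.symm, d24, d24.symm, d25, d25.symm, d34, d34.symm, d35, d35.symm, d45, d45.symm]
  have hlink : (fun a b f c d e =>
      pd f (pd e (fun x => x i4 * x i5 * CC i0 i1 i2 i3 a b c d)) (0 : Fin n → ℝ))
      = fun a b f c d e : Fin n =>
        pd f (pd e (fun x => rhs4 η L x a b c d)) (0 : Fin n → ℝ) := by
    funext a b f c d e
    have h : (fun x => x i4 * x i5 * CC i0 i1 i2 i3 a b c d)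
        = fun x => rhs4 η L x a b c d := funext fun x => hEq4 x a b c d
    rw [h]
  rw [hlink, hzero] at hval
  norm_num at hval

end Main

/-- **Non-existence in dimension `n ≥ 6`.**  For every `n ≥ 6` and every signature there
is a smooth Weyl candidate on flat `ℝⁿ` admitting no three times continuously
differentiable Lanczos potential (with `L_{abc} = L_{[ab]c}`) via equation (4). -/
theorem lanczos_potential_does_not_generally_exist_dim_ge_six
    (n : ℕ) (hn : 6 ≤ n) (η : Fin n → ℝ) (hη : ∀ i, η i = 1 ∨ η i = -1) :
    ∃ W : (Fin n → ℝ) → Fin n → Fin n → Fin n → Fin n → ℝ,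
      (∀ a b c d, ContDiff ℝ ∞ (fun x => W x a b c d)) ∧
      WeylCandidate η W ∧
      ¬ ∃ L : (Fin n → ℝ) → Fin n → Fin n → Fin n → ℝ,
          (∀ a b c, ContDiff ℝ 3 (fun x => L x a b c)) ∧
          (∀ x a b c, L x a b c = - L x b a c) ∧
          Eq4 η W L := by
  obtain ⟨W, h1, h2, h3⟩ := main_aux η
    (⟨0, by omega⟩ : Fin n) ⟨1, by omega⟩ ⟨2, by omega⟩ ⟨3, by omega⟩ ⟨4, by omega⟩ ⟨5, by omega⟩
    (Fin.ne_of_val_ne (by norm_num))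
    (Fin.ne_of_val_ne (by norm_num))
    (Fin.ne_of_val_ne (by norm_num))
    (Fin.ne_of_val_ne (by norm_num))
    (Fin.ne_of_val_ne (by norm_num))
    (Fin.ne_of_val_ne (by norm_num))
    (Fin.ne_of_val_ne (by norm_num))
    (Fin.ne_of_val_ne (by norm_num))
    (Fin.ne_of_val_ne (by norm_num))
    (Fin.ne_of_val_ne (by norm_num))
    (Fin.ne_of_val_ne (by norm_num))
    (Fin.ne_of_val_ne (by norm_num))
    (Fin.ne_of_val_ne (by norm_num))
    (Fin.ne_of_val_ne (by norm_num))
    (Fin.ne_of_val_ne (by norm_num))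
  exact ⟨W, h1, h2, h3⟩
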